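/- Let H be a complex Hilbert space and T a bounded linear operator on H that is hyponormal, i.e., TT* ≤ T*T. If T is binormal, i.e., T*T commutes with TT*, then T^n is hyponormal for every n ∈ ℕ, n ≥ 1. -/

import Mathlib

open ContinuousLinearMap

variable {H : Type*} [NormedAddCommGroup H] [InnerProductSpace ℂ H] [CompleteSpace H]

/-- `|T| = (T^*T)^{1/2}`, via the continuous functional calculus. -/
noncomputable def opAbs (T : H →L[ℂ] H) : H →L[ℂ] H :=
  cfc Real.sqrt (adjoint T * T)

/-- The real power `A^s` of a (positive) operator, via the continuous functional calculus. -/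
noncomputable def opPow (A : H →L[ℂ] H) (s : ℝ) : H →L[ℂ] H :=
  cfc (fun x : ℝ => x ^ s) A

/-- `T` is absolute-`(p,r)`-paranormal if
`‖ |T|^p |T^*|^r x ‖^r ≥ ‖ |T^*|^r x ‖^(p+r)` for every unit vector `x`. -/
def AbsPRParanormal (p r : ℝ) (T : H →L[ℂ] H) : Prop :=
  ∀ x : H, ‖x‖ = 1 →
    ‖opPow (opAbs (adjoint T)) r x‖ ^ (p + r) ≤
      ‖opPow (opAbs T) p (opPow (opAbs (adjoint T)) r x)‖ ^ r

lemma commute_cfc_aux (a b : H →L[ℂ] H) (ha : IsSelfAdjoint a) (hab : Commute a b)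
    (f : ℝ → ℝ) : Commute (cfc f a) b := by
  have hclosed : IsClosed {x : H →L[ℂ] H | Commute x b} := by
    have : {x : H →L[ℂ] H | Commute x b} =
        (fun x : H →L[ℂ] H => x * b - b * x) ⁻¹' {0} := by
      ext x
      simp [Commute, SemiconjBy, sub_eq_zero]
    rw [this]
    exact isClosed_singleton.preimage ((continuous_id.mul continuous_const).sub
      (continuous_const.mul continuous_id))
  by_cases hf : ContinuousOn f (spectrum ℝ a)
  · rw [cfc_apply f a ha hf]
    have hmem : (⟨_, hf.restrict⟩ : C(spectrum ℝ a, ℝ)) ∈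
        closure (polynomialFunctions (spectrum ℝ a) : Set C(spectrum ℝ a, ℝ)) := by
      rw [← Subalgebra.topologicalClosure_coe, polynomialFunctions.topologicalClosure]
      exact Algebra.mem_top
    have hmaps : Set.MapsTo (cfcHom ha (R := ℝ))
        (polynomialFunctions (spectrum ℝ a) : Set C(spectrum ℝ a, ℝ))
        {x : H →L[ℂ] H | Commute x b} := by
      intro q hq
      rw [polynomialFunctions_coe] at hq
      obtain ⟨p, rfl⟩ := hq
      have key : cfcHom ha (Polynomial.toContinuousMapOnAlgHom (spectrum ℝ a) p) =
          Polynomial.aeval a p := by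
        have h2 := cfc_polynomial p a ha
        rw [cfc_apply _ a ha (Polynomial.continuous p).continuousOn] at h2
        exact h2
      have haev : ∀ q : Polynomial ℝ, Commute (Polynomial.aeval a q) b := by
        intro q
        induction q using Polynomial.induction_on' with
        | add q r hq hr => simpa [map_add] using hq.add_left hr
        | monomial m c =>
          rw [Polynomial.aeval_monomial]
          exact (Algebra.commute_algebraMap_left c b).mul_left (hab.pow_left m)
      show Commute _ b
      rw [key]
      exact haev p
    have := map_mem_closure (cfcHom_isClosedEmbedding ha (R := ℝ)).continuous hmem hmaps
    rwa [hclosed.closure_eq] at this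
  · rw [cfc_apply_of_not_continuousOn a hf]
    exact Commute.zero_left b

lemma mul_nonneg_of_commute {a b : H →L[ℂ] H} (ha : 0 ≤ a) (hb : 0 ≤ b)
    (hab : Commute a b) : 0 ≤ a * b := by
  have hasa : IsSelfAdjoint a := .of_nonneg ha
  set r := cfc Real.sqrt a with hrdef
  have hr0 : 0 ≤ r := cfc_nonneg fun x _ => Real.sqrt_nonneg x
  have hrsa : IsSelfAdjoint r := .of_nonneg hr0
  have hrr : r * r = a := by
    rw [hrdef, ← cfc_mul _ _ a Real.continuous_sqrt.continuousOn
      Real.continuous_sqrt.continuousOn]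
    calc cfc (fun x => Real.sqrt x * Real.sqrt x) a
        = cfc (id : ℝ → ℝ) a :=
          cfc_congr fun x hx => Real.mul_self_sqrt (spectrum_nonneg_of_nonneg ha hx)
      _ = a := cfc_id ℝ a
  have hcomm : Commute r b := commute_cfc_aux a b hasa hab Real.sqrt
  calc (0 : H →L[ℂ] H) ≤ star r * b * r := star_left_conjugate_nonneg hb r
    _ = a * b := by
        rw [hrsa.star_eq, hcomm.eq, mul_assoc, hrr]
        exact hab.symm.eq

lemma pow_nonneg_aux {a : H →L[ℂ] H} (ha : 0 ≤ a) : ∀ n : ℕ, 0 ≤ a ^ n := by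
  intro n
  induction n with
  | zero => simp
  | succ n ih =>
    rw [pow_succ]
    exact mul_nonneg_of_commute ih ha ((Commute.refl a).pow_left n)

lemma pow_le_pow_of_commute {a b : H →L[ℂ] H} (hb : 0 ≤ b) (hba : b ≤ a)
    (hab : Commute a b) : ∀ n : ℕ, b ^ n ≤ a ^ n := by
  have ha : 0 ≤ a := hb.trans hba
  intro n
  induction n with
  | zero => simp
  | succ n ih =>
    have h1 : 0 ≤ a ^ n * (a - b) :=
      mul_nonneg_of_commute (pow_nonneg_aux ha n) (sub_nonneg.2 hba)
        (((Commute.refl a).sub_right hab).pow_left n)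
    have h2 : 0 ≤ (a ^ n - b ^ n) * b :=
      mul_nonneg_of_commute (sub_nonneg.2 ih) hb
        ((hab.pow_left n).sub_left ((Commute.refl b).pow_left n))
    have h3 := add_nonneg h1 h2
    have heq : a ^ n * (a - b) + (a ^ n - b ^ n) * b = a ^ (n + 1) - b ^ (n + 1) := by
      rw [mul_sub, sub_mul, pow_succ, pow_succ]
      abel
    rw [heq] at h3
    exact sub_nonneg.1 h3

theorem stmt_8 (T : H →L[ℂ] H)
    (hhypo : (adjoint T * T - T * adjoint T).IsPositive)
    (hbin : (adjoint T * T) * (T * adjoint T) = (T * adjoint T) * (adjoint T * T))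
    (n : ℕ) (hn : 1 ≤ n) :
    (adjoint (T ^ n) * T ^ n - T ^ n * adjoint (T ^ n)).IsPositive := by
  simp only [← star_eq_adjoint] at hhypo hbin ⊢
  set a := star T * T with hadef
  set b := T * star T with hbdef
  have hab : Commute a b := hbin
  have hb0 : 0 ≤ b := mul_star_self_nonneg T
  have h0 : b ≤ a := (le_def b a).2 hhypo
  have L2 : ∀ m : ℕ, b ^ m ≤ a ^ m := pow_le_pow_of_commute hb0 h0 hab
  have L1 : ∀ m : ℕ, a ^ m ≤ (star T) ^ m * T ^ m := by
    intro m
    induction m with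
    | zero => simp
    | succ m ih =>
      have hsemi : star T * b ^ m = a ^ m * star T := by
        have hs : SemiconjBy (star T) b a := (mul_assoc (star T) T (star T)).symm
        exact (hs.pow_right m).eq
      calc a ^ (m + 1) = star T * b ^ m * T := by
            rw [hsemi, mul_assoc, pow_succ]
        _ ≤ star T * ((star T) ^ m * T ^ m) * T :=
            star_left_conjugate_le_conjugate ((L2 m).trans ih) T
        _ = (star T) ^ (m + 1) * T ^ (m + 1) := by
            rw [pow_succ', pow_succ]
            simp only [mul_assoc]
  have L3 : ∀ m : ℕ, T ^ m * (star T) ^ m ≤ b ^ m := by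
    intro m
    induction m with
    | zero => simp
    | succ m ih =>
      have hsemi : T * a ^ m = b ^ m * T := by
        have hs : SemiconjBy T a b := (mul_assoc T (star T) T).symm
        exact (hs.pow_right m).eq
      calc T ^ (m + 1) * (star T) ^ (m + 1)
          = T * (T ^ m * (star T) ^ m) * star T := by
            rw [pow_succ', pow_succ]
            simp only [mul_assoc]
        _ ≤ T * a ^ m * star T := star_right_conjugate_le_conjugate (ih.trans (L2 m)) T
        _ = b ^ (m + 1) := by rw [hsemi, mul_assoc, pow_succ]
  have final : T ^ n * (star T) ^ n ≤ (star T) ^ n * T ^ n :=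
    (L3 n).trans ((L2 n).trans (L1 n))
  rw [star_pow]
  exact (le_def _ _).1 final
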